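/- Let R be a commutative ring and M an R-module. Then M is τ_q-finitely generated if and only if M ⊗_R T(R[x]) is a finitely generated T(R[x])-module. -/

import Mathlib

open Polynomial TensorProduct nonZeroDivisors

universe u v

/-- An ideal is *semi-regular* if it contains a finitely generated dense subideal
(an ideal is *dense* if its annihilator is zero). -/
def Ideal.IsSemiregular {R : Type*} [CommRing R] (I : Ideal R) : Prop :=
  ∃ J : Ideal R, J ≤ I ∧ J.FG ∧ Submodule.annihilator J = ⊥

/-- A module is *Q-torsion* if every element is annihilated by some finitely
generated semi-regular ideal. -/
def IsQTorsion (R : Type*) (M : Type*) [CommRing R] [AddCommGroup M] [Module R M] : Prop :=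
  ∀ m : M, ∃ I : Ideal R, I.FG ∧ I.IsSemiregular ∧ ∀ a ∈ I, a • m = 0

/-- A module is *τ_q-finitely generated* if it has a finitely generated submodule
with Q-torsion quotient. -/
def IsTauQFG (R : Type u) (M : Type v) [CommRing R] [AddCommGroup M] [Module R M] : Prop :=
  ∃ N : Submodule R M, N.FG ∧ IsQTorsion R (M ⧸ N)

section Aux

variable {R : Type u} [CommRing R]

/-- Key lemma: `1 ⊗ k = 0` in `T(R[x]) ⊗ K` iff some non-zerodivisor polynomial has all
its coefficients annihilating `k`. -/
lemma key_tmul_eq_zero_iff {K : Type v} [AddCommGroup K] [Module R K] (k : K) :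
    (1 : FractionRing (Polynomial R)) ⊗ₜ[R] k = (0 : FractionRing (Polynomial R) ⊗[R] K) ↔
      ∃ s : (Polynomial R)⁰, ∀ j, ((s : Polynomial R).coeff j) • k = 0 := by
  classical
  set A := Polynomial R
  set T := FractionRing A
  let f1 : (A ⊗[R] K) →ₗ[A] T ⊗[A] (A ⊗[R] K) := TensorProduct.mk A T (A ⊗[R] K) 1
  haveI hf1 : IsLocalizedModule A⁰ f1 := by
    rw [isLocalizedModule_iff_isBaseChange A⁰ T]
    exact TensorProduct.isBaseChange A (A ⊗[R] K) T
  let e : (T ⊗[A] (A ⊗[R] K)) ≃ₗ[A] T ⊗[R] K :=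
    TensorProduct.AlgebraTensorModule.cancelBaseChange R A A T K
  let F : (A ⊗[R] K) →ₗ[A] T ⊗[R] K := (e : T ⊗[A] (A ⊗[R] K) ≃ₗ[A] T ⊗[R] K) ∘ₗ f1
  haveI : IsLocalizedModule A⁰ F := IsLocalizedModule.of_linearEquiv A⁰ f1 e
  have hFk : F ((1 : A) ⊗ₜ[R] k) = (1 : T) ⊗ₜ[R] k := by
    simp only [F, f1, LinearMap.coe_comp, LinearEquiv.coe_coe, Function.comp_apply,
      TensorProduct.mk_apply, e,
      TensorProduct.AlgebraTensorModule.cancelBaseChange_tmul, one_smul]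
  rw [← hFk, IsLocalizedModule.eq_zero_iff A⁰ F]
  have hsmul : ∀ s : A⁰, s • ((1 : A) ⊗ₜ[R] k) = (s : A) ⊗ₜ[R] k := by
    intro s
    rw [Submonoid.smul_def, smul_tmul', smul_eq_mul, mul_one]
  constructor
  · rintro ⟨s, hs⟩
    rw [hsmul s] at hs
    refine ⟨s, fun j => ?_⟩
    let co : (A ⊗[R] K) →ₗ[R] K :=
      (TensorProduct.lid R K).toLinearMap ∘ₗ LinearMap.rTensor K (lcoeff R j)
    have := congrArg co hs
    simp only [co, LinearMap.coe_comp, Function.comp_apply, LinearMap.rTensor_tmul,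
      LinearEquiv.coe_coe, TensorProduct.lid_tmul, map_zero] at this
    exact this
  · rintro ⟨s, hs⟩
    refine ⟨s, ?_⟩
    rw [hsmul s]
    conv_lhs => rw [(s : A).as_sum_support]
    rw [TensorProduct.sum_tmul]
    apply Finset.sum_eq_zero
    intro i _
    rw [← Polynomial.smul_X_eq_monomial, smul_tmul, hs i, tmul_zero]

/-- From an annihilating f.g. semi-regular ideal, produce a non-zerodivisor polynomial whose
coefficients annihilate `k`. -/
lemma exists_poly_of_torsion {K : Type v} [AddCommGroup K] [Module R K] (k : K)
    (h : ∃ I : Ideal R, I.FG ∧ I.IsSemiregular ∧ ∀ a ∈ I, a • k = 0) :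
    ∃ s : (Polynomial R)⁰, ∀ j, ((s : Polynomial R).coeff j) • k = 0 := by
  classical
  obtain ⟨I, -, ⟨J, hJI, ⟨u, hu⟩, hann⟩, hk⟩ := h
  set l := u.toList with hl
  set v : ℕ → R := fun i => l.getD i 0 with hv
  have hvJ : ∀ i, v i ∈ J := by
    intro i
    by_cases hi : i < l.length
    · have : v i = l.get ⟨i, hi⟩ := List.getD_eq_getElem l 0 hi
      rw [this]
      have hmem : l.get ⟨i, hi⟩ ∈ u := by
        rw [← Finset.mem_toList]
        exact List.get_mem l ⟨i, hi⟩
      rw [← hu]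
      exact Ideal.subset_span hmem
    · have : v i = 0 := List.getD_eq_default l 0 (not_lt.1 hi)
      rw [this]; exact J.zero_mem
  set g : Polynomial R := ∑ i ∈ Finset.range l.length, C (v i) * X ^ i with hg
  have hcoeff : ∀ j, g.coeff j = if j < l.length then v j else 0 := by
    intro j
    rw [hg, Polynomial.finset_sum_coeff]
    simp_rw [Polynomial.coeff_C_mul_X_pow]
    rw [Finset.sum_ite_eq (Finset.range l.length) j v]
    simp [Finset.mem_range]
  have hgmem : g ∈ (Polynomial R)⁰ := by
    rw [Polynomial.mem_nonZeroDivisors_iff]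
    intro a ha
    have hacoeff : ∀ j, a * g.coeff j = 0 := by
      intro j
      have := congrArg (fun p => Polynomial.coeff p j) ha
      simpa [Polynomial.coeff_smul, smul_eq_mul] using this
    have haJ : a ∈ Submodule.annihilator J := by
      rw [← hu, ← Ideal.submodule_span_eq, Submodule.mem_annihilator_span]
      rintro ⟨x, hx⟩
      have hxl : x ∈ l := Finset.mem_toList.2 (Finset.mem_coe.1 hx)
      obtain ⟨⟨i, hi⟩, hxi⟩ := List.mem_iff_get.1 hxl
      have hvx : v i = x := by rw [hv]; simp only [List.getD_eq_getElem l 0 hi]; exact hxi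
      have := hacoeff i
      rw [hcoeff i, if_pos hi, hvx] at this
      simpa [smul_eq_mul] using this
    rw [hann] at haJ
    simpa using haJ
  refine ⟨⟨g, hgmem⟩, fun j => ?_⟩
  show g.coeff j • k = 0
  rw [hcoeff j]
  by_cases hj : j < l.length
  · rw [if_pos hj]
    exact hk _ (hJI (hvJ j))
  · rw [if_neg hj, zero_smul]

/-- From a non-zerodivisor polynomial whose coefficients annihilate `k`, produce an
annihilating f.g. semi-regular ideal. -/
lemma torsion_of_poly {K : Type v} [AddCommGroup K] [Module R K] (k : K)
    (h : ∃ s : (Polynomial R)⁰, ∀ j, ((s : Polynomial R).coeff j) • k = 0) :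
    ∃ I : Ideal R, I.FG ∧ I.IsSemiregular ∧ ∀ a ∈ I, a • k = 0 := by
  classical
  obtain ⟨⟨s, hs⟩, hsk⟩ := h
  set I : Ideal R := Ideal.span (Set.range fun j : Fin (s.natDegree + 1) => s.coeff j) with hI
  have hIfg : I.FG := Submodule.fg_span (Set.finite_range _)
  have hIann : Submodule.annihilator I = ⊥ := by
    rw [eq_bot_iff]
    intro a ha
    rw [hI, ← Ideal.submodule_span_eq, Submodule.mem_annihilator_span] at ha
    have hcoeff : ∀ j, a * s.coeff j = 0 := by
      intro j
      by_cases hj : j ≤ s.natDegree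
      · have := ha ⟨s.coeff j, ⟨⟨j, Nat.lt_succ_of_le hj⟩, rfl⟩⟩
        simpa [smul_eq_mul] using this
      · rw [Polynomial.coeff_eq_zero_of_natDegree_lt (not_le.1 hj), mul_zero]
    have hzero : a • s = 0 := by
      ext j
      simp [Polynomial.coeff_smul, smul_eq_mul, hcoeff j]
    have := Polynomial.mem_nonZeroDivisors_iff.1 hs a hzero
    simpa using this
  have hIk : ∀ a ∈ I, a • k = 0 := by
    intro a ha
    have hle : I ≤ (Submodule.span R {k}).annihilator := by
      rw [hI, Ideal.span_le]
      rintro x ⟨j, rfl⟩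
      exact (Submodule.mem_annihilator_span_singleton k _).2 (hsk j)
    exact (Submodule.mem_annihilator_span_singleton k a).1 (hle ha)
  exact ⟨I, hIfg, ⟨I, le_rfl, hIfg, hIann⟩, hIk⟩

lemma subsingleton_of_qtorsion {K : Type v} [AddCommGroup K] [Module R K]
    (h : IsQTorsion R K) :
    ∀ z : FractionRing (Polynomial R) ⊗[R] K, z = 0 := by
  intro z
  induction z using TensorProduct.induction_on with
  | zero => rfl
  | tmul t k =>
    have h1 : (1 : FractionRing (Polynomial R)) ⊗ₜ[R] k = 0 :=
      (key_tmul_eq_zero_iff k).2 (exists_poly_of_torsion k (h k))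
    calc t ⊗ₜ[R] k = t • ((1 : FractionRing (Polynomial R)) ⊗ₜ[R] k) := by
          rw [smul_tmul', smul_eq_mul, mul_one]
      _ = 0 := by rw [h1, smul_zero]
  | add x y hx hy => rw [hx, hy, add_zero]

end Aux

/-- An `R`-module `M` is τ_q-finitely generated if and only if `M ⊗_R T(R[x])` is a
finitely generated `T(R[x])`-module. -/
theorem statement3 (R : Type u) [CommRing R] (M : Type u) [AddCommGroup M] [Module R M] :
    IsTauQFG R M ↔
      Module.Finite (FractionRing (Polynomial R)) ((FractionRing (Polynomial R)) ⊗[R] M) := by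
  classical
  set T := FractionRing (Polynomial R)
  constructor
  · rintro ⟨N, hNfg, hQ⟩
    haveI : Module.Finite R N := Module.Finite.iff_fg.2 hNfg
    haveI : Module.Finite T (T ⊗[R] N) := Module.Finite.base_change R T N
    apply Module.Finite.of_surjective (LinearMap.baseChange T N.subtype)
    have hexact := lTensor_exact T (LinearMap.exact_subtype_mkQ N) (Submodule.mkQ_surjective N)
    have hzero := subsingleton_of_qtorsion (R := R) hQ
    rw [show (⇑(LinearMap.baseChange T N.subtype)) = ⇑(LinearMap.lTensor T N.subtype) from
      LinearMap.baseChange_eq_ltensor N.subtype]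
    intro x
    have hx : x ∈ LinearMap.ker (LinearMap.lTensor T N.mkQ) := by
      rw [LinearMap.mem_ker]
      exact hzero _
    rw [LinearMap.exact_iff.1 hexact] at hx
    exact hx
  · intro hfin
    obtain ⟨G, hG⟩ := hfin.fg_top
    choose F hF using fun z : T ⊗[R] M => TensorProduct.exists_finset z
    set s : Set M := ⋃ z ∈ G, Prod.snd '' (↑(F z) : Set (T × M)) with hsdef
    have hsfin : s.Finite :=
      Set.Finite.biUnion G.finite_toSet (fun z _ => (F z).finite_toSet.image _)
    refine ⟨Submodule.span R s, Submodule.fg_span hsfin, ?_⟩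
    set N : Submodule R M := Submodule.span R s
    intro q
    obtain ⟨m, rfl⟩ := Submodule.mkQ_surjective N q
    apply torsion_of_poly
    apply (key_tmul_eq_zero_iff (N.mkQ m)).1
    set φ : (T ⊗[R] M) →ₗ[T] T ⊗[R] (M ⧸ N) := LinearMap.baseChange T N.mkQ with hφdef
    have hφG : ∀ z ∈ G, φ z = 0 := by
      intro z hz
      rw [hF z, map_sum]
      apply Finset.sum_eq_zero
      intro i hi
      rw [hφdef, LinearMap.baseChange_tmul]
      have hmem : i.2 ∈ N := Submodule.subset_span (Set.mem_biUnion hz ⟨i, hi, rfl⟩)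
      have : N.mkQ i.2 = 0 := by
        rw [Submodule.mkQ_apply, Submodule.Quotient.mk_eq_zero]
        exact hmem
      rw [this, tmul_zero]
    have hker : (⊤ : Submodule T (T ⊗[R] M)) ≤ LinearMap.ker φ := by
      rw [← hG]
      exact Submodule.span_le.2 (fun z hz => hφG z hz)
    have hφm : φ ((1 : T) ⊗ₜ[R] m) = 0 := hker (Submodule.mem_top)
    rw [hφdef, LinearMap.baseChange_tmul] at hφm
    exact hφm
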